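/- Let x_b ∈ I and let M, M̃ be integers with M ≥ M̃ ≥ 1 and M ≥ 2. Let α, c_{−1}, c_0, c_1, d_0, …, d_{M̃−1} : ℝ → ℂ be continuous on a neighborhood of 0 with α(0) ≠ 0. Assume that, as h → 0: c_1(h)·𝔈_1(h) − α(h) = O(h^{M+1}); c_{−1}(h)·𝔈_1(−h) − α(h) = O(h^{M+1}); c_0(h) + c_1(h)·𝔈_0(h) + c_{−1}(h)·𝔈_0(−h) = O(h^{M+2}); and, for each 0 ≤ ℓ ≤ M̃−1, d_ℓ(h) + δ_{ℓ,0} − c_1(h)·𝔉_ℓ(h) − (−1)^ℓ·c_{−1}(h)·𝔉_ℓ(−h) = O(h^{M̃−ℓ}), where δ_{ℓ,0} = 1 if ℓ = 0 and δ_{ℓ,0} = 0 otherwise. Then for every infinitely differentiable u : I → ℂ satisfying (a u')' + k u = f on I, one has, as h → 0: c_{−1}(h)·u(x_b−h) + c_0(h)·u(x_b) + c_1(h)·u(x_b+h) − h²·Σ_{ℓ=0}^{M̃−1} d_ℓ(h)·h^ℓ·f^{(ℓ)}(x_b) − h²·f(x_b) = O(h^{M̃+2}); equivalently, the compact finite difference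 scheme L_h u(x_b) := h^{−2}[c_{−1}(h)u(x_b−h)+c_0(h)u(x_b)+c_1(h)u(x_b+h)] − Σ_{ℓ=0}^{M̃−1} d_ℓ(h)h^ℓ f^{(ℓ)}(x_b) has accuracy order M̃ at x_b, i.e. L_h u(x_b) − f(x_b) = O(h^{M̃}). -/

import Mathlib

open Filter Topology Asymptotics

/-- `Ecoef a k n = (E_{n+2,0}, E_{n+2,1})` from the recursion of the paper. -/
noncomputable def Ecoef (a : ℝ → ℝ) (k : ℝ → ℂ) : ℕ → (ℝ → ℂ) × (ℝ → ℂ)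
  | 0 => (fun x => -k x / (a x : ℂ), fun x => -((deriv a x : ℝ) : ℂ) / (a x : ℂ))
  | n + 1 =>
      (fun x => deriv (Ecoef a k n).1 x - k x / (a x : ℂ) * (Ecoef a k n).2 x,
       fun x => (Ecoef a k n).1 x + deriv (Ecoef a k n).2 x
          - ((deriv a x : ℝ) : ℂ) / (a x : ℂ) * (Ecoef a k n).2 x)

/-- `E_{j,0}` for `j ≥ 2` (junk value for `j < 2`). -/
noncomputable def Ej0 (a : ℝ → ℝ) (k : ℝ → ℂ) (j : ℕ) : ℝ → ℂ := (Ecoef a k (j - 2)).1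

/-- `E_{j,1}` for `j ≥ 2` (junk value for `j < 2`). -/
noncomputable def Ej1 (a : ℝ → ℝ) (k : ℝ → ℂ) (j : ℕ) : ℝ → ℂ := (Ecoef a k (j - 2)).2

/-- `Fcoef a k n m = F_{n+2, m-1}` (second index shifted by one: `m = ℓ + 1`, `ℓ ≥ -1`). -/
noncomputable def Fcoef (a : ℝ → ℝ) (k : ℝ → ℂ) : ℕ → ℕ → ℝ → ℂ
  | 0, 0 => fun x => (Ecoef a k 0).2 x / (a x : ℂ)
  | 0, 1 => fun x => 1 / (a x : ℂ)
  | 0, _ + 2 => fun _ => 0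
  | n + 1, 0 => fun x => (Ecoef a k (n + 1)).2 x / (a x : ℂ)
  | n + 1, m + 1 => fun x => deriv (Fcoef a k n (m + 1)) x + Fcoef a k n m x

/-- `F_{j,ℓ}` for `j ≥ 2`, `ℓ ≥ 0` (junk value for `j < 2`). -/
noncomputable def Fjl (a : ℝ → ℝ) (k : ℝ → ℂ) (j ℓ : ℕ) : ℝ → ℂ := Fcoef a k (j - 2) (ℓ + 1)

/-- `𝔈₀(h) = 1 + ∑_{j=2}^{B} E_{j,0}(x_b) h^j / j!`. -/
noncomputable def EPoly0 (a : ℝ → ℝ) (k : ℝ → ℂ) (xb : ℝ) (B : ℕ) (h : ℝ) : ℂ :=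
  1 + ∑ j ∈ Finset.Icc 2 B, Ej0 a k j xb * (h : ℂ) ^ j / (Nat.factorial j : ℂ)

/-- `𝔈₁(h) = 1 + ∑_{j=2}^{B} E_{j,1}(x_b) h^(j-1) / j!`. -/
noncomputable def EPoly1 (a : ℝ → ℝ) (k : ℝ → ℂ) (xb : ℝ) (B : ℕ) (h : ℝ) : ℂ :=
  1 + ∑ j ∈ Finset.Icc 2 B, Ej1 a k j xb * (h : ℂ) ^ (j - 1) / (Nat.factorial j : ℂ)

/-- `𝔉_ℓ(h) = ∑_{j=ℓ+2}^{B} F_{j,ℓ}(x_b) h^(j-ℓ-2) / j!`. -/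
noncomputable def FPoly (a : ℝ → ℝ) (k : ℝ → ℂ) (xb : ℝ) (ℓ B : ℕ) (h : ℝ) : ℂ :=
  ∑ j ∈ Finset.Icc (ℓ + 2) B, Fjl a k j ℓ xb * (h : ℂ) ^ (j - ℓ - 2) / (Nat.factorial j : ℂ)



section Aux

variable {p q : ℝ} {a : ℝ → ℝ} {k f u : ℝ → ℂ}

lemma hSopen : IsOpen (Set.Ioo p q) := isOpen_Ioo

lemma diffAt_of_smooth {g : ℝ → ℂ} (hg : ContDiffOn ℝ (⊤:ℕ∞) g (Set.Ioo p q)) {x : ℝ}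
    (hx : x ∈ Set.Ioo p q) : DifferentiableAt ℝ g x :=
  (hg.contDiffAt (hSopen.mem_nhds hx)).differentiableAt (by simp)

lemma diffAt_of_smoothR {g : ℝ → ℝ} (hg : ContDiffOn ℝ (⊤:ℕ∞) g (Set.Ioo p q)) {x : ℝ}
    (hx : x ∈ Set.Ioo p q) : DifferentiableAt ℝ g x :=
  (hg.contDiffAt (hSopen.mem_nhds hx)).differentiableAt (by simp)

lemma deriv_smooth {g : ℝ → ℂ} (hg : ContDiffOn ℝ (⊤:ℕ∞) g (Set.Ioo p q)) :
    ContDiffOn ℝ (⊤:ℕ∞) (deriv g) (Set.Ioo p q) :=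
  ((contDiffOn_infty_iff_deriv_of_isOpen hSopen).mp hg).2

lemma derivR_smooth {g : ℝ → ℝ} (hg : ContDiffOn ℝ (⊤:ℕ∞) g (Set.Ioo p q)) :
    ContDiffOn ℝ (⊤:ℕ∞) (deriv g) (Set.Ioo p q) :=
  ((contDiffOn_infty_iff_deriv_of_isOpen hSopen).mp hg).2

lemma iteratedDeriv_smooth {g : ℝ → ℂ} (hg : ContDiffOn ℝ (⊤:ℕ∞) g (Set.Ioo p q)) (m : ℕ) :
    ContDiffOn ℝ (⊤:ℕ∞) (iteratedDeriv m g) (Set.Ioo p q) := by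
  induction m with
  | zero => simpa [iteratedDeriv_zero] using hg
  | succ m ih => rw [iteratedDeriv_succ]; exact deriv_smooth ih

lemma aC_smooth (ha : ContDiffOn ℝ (⊤:ℕ∞) a (Set.Ioo p q)) :
    ContDiffOn ℝ (⊤:ℕ∞) (fun x => (a x : ℂ)) (Set.Ioo p q) :=
  Complex.ofRealCLM.contDiff.comp_contDiffOn ha

lemma aC_ne (hapos : ∀ x ∈ Set.Ioo p q, 0 < a x) :
    ∀ x ∈ Set.Ioo p q, (a x : ℂ) ≠ 0 := fun x hx => by
  exact_mod_cast (hapos x hx).ne'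

lemma cdiv_smooth {g1 g2 : ℝ → ℂ} (h1 : ContDiffOn ℝ (⊤:ℕ∞) g1 (Set.Ioo p q))
    (h2 : ContDiffOn ℝ (⊤:ℕ∞) g2 (Set.Ioo p q)) (hne : ∀ x ∈ Set.Ioo p q, g2 x ≠ 0) :
    ContDiffOn ℝ (⊤:ℕ∞) (fun x => g1 x / g2 x) (Set.Ioo p q) := by
  simp only [div_eq_mul_inv]
  exact h1.mul (h2.inv hne)

lemma ecoef_smooth (ha : ContDiffOn ℝ (⊤:ℕ∞) a (Set.Ioo p q))
    (hk : ContDiffOn ℝ (⊤:ℕ∞) k (Set.Ioo p q)) (hapos : ∀ x ∈ Set.Ioo p q, 0 < a x) :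
    ∀ n, ContDiffOn ℝ (⊤:ℕ∞) (Ecoef a k n).1 (Set.Ioo p q) ∧
      ContDiffOn ℝ (⊤:ℕ∞) (Ecoef a k n).2 (Set.Ioo p q) := by
  have haC := aC_smooth ha
  have hane := aC_ne hapos
  have hdaC : ContDiffOn ℝ (⊤:ℕ∞) (fun x => ((deriv a x : ℝ) : ℂ)) (Set.Ioo p q) :=
    aC_smooth (derivR_smooth ha)
  intro n
  induction n with
  | zero =>
    constructor
    · exact cdiv_smooth hk.neg haC hane
    · exact cdiv_smooth hdaC.neg haC hane
  | succ n ih =>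
    constructor
    · exact (deriv_smooth ih.1).sub ((cdiv_smooth hk haC hane).mul ih.2)
    · exact (ih.1.add (deriv_smooth ih.2)).sub ((cdiv_smooth hdaC haC hane).mul ih.2)

lemma fcoef_smooth (ha : ContDiffOn ℝ (⊤:ℕ∞) a (Set.Ioo p q))
    (hk : ContDiffOn ℝ (⊤:ℕ∞) k (Set.Ioo p q)) (hapos : ∀ x ∈ Set.Ioo p q, 0 < a x) :
    ∀ n m, ContDiffOn ℝ (⊤:ℕ∞) (Fcoef a k n m) (Set.Ioo p q) := by
  have haC := aC_smooth ha
  have hane := aC_ne hapos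
  intro n
  induction n with
  | zero =>
    intro m
    match m with
    | 0 => exact cdiv_smooth (ecoef_smooth ha hk hapos 0).2 haC hane
    | 1 => exact cdiv_smooth contDiffOn_const haC hane
    | (m+2) => exact contDiffOn_const
  | succ n ih =>
    intro m
    match m with
    | 0 => exact cdiv_smooth (ecoef_smooth ha hk hapos (n+1)).2 haC hane
    | (m+1) => exact (deriv_smooth (ih (m+1))).add (ih m)

lemma fcoef_eq_zero (a : ℝ → ℝ) (k : ℝ → ℂ) :
    ∀ n m, n + 2 ≤ m → Fcoef a k n m = fun _ => (0:ℂ) := by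
  intro n
  induction n with
  | zero =>
    intro m hm
    match m, hm with
    | (m+2), _ => rfl
  | succ n ih =>
    intro m hm
    match m, hm with
    | (m+1), hm =>
      have h1 : n + 2 ≤ m + 1 := by omega
      have h2 : n + 2 ≤ m := by omega
      show (fun x => deriv (Fcoef a k n (m+1)) x + Fcoef a k n m x) = fun _ => (0:ℂ)
      rw [ih (m+1) h1, ih m h2]
      funext x
      simp

lemma fcoef_zero_idx (a : ℝ → ℝ) (k : ℝ → ℂ) (n : ℕ) :
    Fcoef a k n 0 = fun x => (Ecoef a k n).2 x / (a x : ℂ) := by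
  cases n <;> rfl

lemma second_deriv_eq (ha : ContDiffOn ℝ (⊤:ℕ∞) a (Set.Ioo p q))
    (hapos : ∀ x ∈ Set.Ioo p q, 0 < a x)
    (hu : ContDiffOn ℝ (⊤:ℕ∞) u (Set.Ioo p q))
    (hode : ∀ x ∈ Set.Ioo p q, deriv (fun y => (a y : ℂ) * deriv u y) x + k x * u x = f x) :
    ∀ x ∈ Set.Ioo p q, deriv (deriv u) x
      = -k x / (a x : ℂ) * u x + (-((deriv a x : ℝ) : ℂ) / (a x : ℂ)) * deriv u x
        + 1 / (a x : ℂ) * f x := by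
  intro x hx
  have hane : (a x : ℂ) ≠ 0 := aC_ne hapos x hx
  have h1 : HasDerivAt (fun y : ℝ => (a y : ℂ)) ((deriv a x : ℝ) : ℂ) x :=
    ((diffAt_of_smoothR ha hx).hasDerivAt).ofReal_comp
  have h2 : HasDerivAt (deriv u) (deriv (deriv u) x) x :=
    (diffAt_of_smooth (deriv_smooth hu) hx).hasDerivAt
  have h3 : HasDerivAt (fun y => (a y : ℂ) * deriv u y)
      (((deriv a x : ℝ) : ℂ) * deriv u x + (a x : ℂ) * deriv (deriv u) x) x := h1.mul h2
  have h4 := h3.deriv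
  have h5 := hode x hx
  rw [h4] at h5
  field_simp
  linear_combination h5

lemma deriv_identity (ha : ContDiffOn ℝ (⊤:ℕ∞) a (Set.Ioo p q))
    (hk : ContDiffOn ℝ (⊤:ℕ∞) k (Set.Ioo p q))
    (hf : ContDiffOn ℝ (⊤:ℕ∞) f (Set.Ioo p q))
    (hapos : ∀ x ∈ Set.Ioo p q, 0 < a x)
    (hu : ContDiffOn ℝ (⊤:ℕ∞) u (Set.Ioo p q))
    (hode : ∀ x ∈ Set.Ioo p q, deriv (fun y => (a y : ℂ) * deriv u y) x + k x * u x = f x) :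
    ∀ n, ∀ x ∈ Set.Ioo p q, iteratedDeriv (n+2) u x
      = (Ecoef a k n).1 x * u x + (Ecoef a k n).2 x * deriv u x
        + ∑ m ∈ Finset.range (n+1), Fcoef a k n (m+1) x * iteratedDeriv m f x := by
  have h2nd := second_deriv_eq ha hapos hu hode
  intro n
  induction n with
  | zero =>
    intro x hx
    have : iteratedDeriv 2 u x = deriv (deriv u) x := by
      rw [show (2:ℕ) = 1 + 1 from rfl, iteratedDeriv_succ, iteratedDeriv_one]
    rw [this, h2nd x hx]
    show _ = -k x / (a x:ℂ) * u x + (-((deriv a x:ℝ):ℂ) / (a x:ℂ)) * deriv u x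
      + ∑ m ∈ Finset.range 1, Fcoef a k 0 (m+1) x * iteratedDeriv m f x
    rw [Finset.sum_range_one]
    show _ = _ + _ + (1 / (a x:ℂ)) * iteratedDeriv 0 f x
    rw [iteratedDeriv_zero]
  | succ n ih =>
    intro x hx
    -- derivative of previous identity
    have hEv : iteratedDeriv (n+2) u =ᶠ[𝓝 x] (fun y =>
        (Ecoef a k n).1 y * u y + (Ecoef a k n).2 y * deriv u y
        + ∑ m ∈ Finset.range (n+1), Fcoef a k n (m+1) y * iteratedDeriv m f y) := by
      filter_upwards [hSopen.mem_nhds hx] with y hy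
      exact ih y hy
    have hstep : iteratedDeriv (n+3) u x = deriv (fun y =>
        (Ecoef a k n).1 y * u y + (Ecoef a k n).2 y * deriv u y
        + ∑ m ∈ Finset.range (n+1), Fcoef a k n (m+1) y * iteratedDeriv m f y) x := by
      rw [iteratedDeriv_succ]
      exact hEv.deriv_eq
    -- compute the derivative of the right-hand side
    have hE := ecoef_smooth ha hk hapos n
    have hF := fcoef_smooth ha hk hapos
    have hdE0 : HasDerivAt (Ecoef a k n).1 (deriv (Ecoef a k n).1 x) x :=
      (diffAt_of_smooth hE.1 hx).hasDerivAt
    have hdE1 : HasDerivAt (Ecoef a k n).2 (deriv (Ecoef a k n).2 x) x :=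
      (diffAt_of_smooth hE.2 hx).hasDerivAt
    have hdu : HasDerivAt u (deriv u x) x := (diffAt_of_smooth hu hx).hasDerivAt
    have hdu' : HasDerivAt (deriv u) (deriv (deriv u) x) x :=
      (diffAt_of_smooth (deriv_smooth hu) hx).hasDerivAt
    have hsum : HasDerivAt (fun y => ∑ m ∈ Finset.range (n+1),
          Fcoef a k n (m+1) y * iteratedDeriv m f y)
        (∑ m ∈ Finset.range (n+1),
          (deriv (Fcoef a k n (m+1)) x * iteratedDeriv m f x
            + Fcoef a k n (m+1) x * iteratedDeriv (m+1) f x)) x := by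
      apply HasDerivAt.fun_sum
      intro m hm
      have hdF : HasDerivAt (Fcoef a k n (m+1)) (deriv (Fcoef a k n (m+1)) x) x :=
        (diffAt_of_smooth (hF n (m+1)) hx).hasDerivAt
      have hdf : HasDerivAt (iteratedDeriv m f) (iteratedDeriv (m+1) f x) x := by
        have := (diffAt_of_smooth (iteratedDeriv_smooth hf m) hx).hasDerivAt
        rwa [show iteratedDeriv (m+1) f x = deriv (iteratedDeriv m f) x from by
          rw [iteratedDeriv_succ]]
      exact hdF.mul hdf
    have hall : HasDerivAt (fun y =>
        (Ecoef a k n).1 y * u y + (Ecoef a k n).2 y * deriv u y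
        + ∑ m ∈ Finset.range (n+1), Fcoef a k n (m+1) y * iteratedDeriv m f y)
        ((deriv (Ecoef a k n).1 x * u x + (Ecoef a k n).1 x * deriv u x)
          + (deriv (Ecoef a k n).2 x * deriv u x + (Ecoef a k n).2 x * deriv (deriv u) x)
          + ∑ m ∈ Finset.range (n+1),
            (deriv (Fcoef a k n (m+1)) x * iteratedDeriv m f x
              + Fcoef a k n (m+1) x * iteratedDeriv (m+1) f x)) x :=
      ((hdE0.mul hdu).add (hdE1.mul hdu')).add hsum
    rw [show n + 1 + 2 = n + 3 from rfl, hstep, hall.deriv]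
    -- now prove the algebraic identity
    rw [h2nd x hx]
    -- unfold `Ecoef (n+1)` and `Fcoef (n+1)`
    show _ = (deriv (Ecoef a k n).1 x - k x / (a x:ℂ) * (Ecoef a k n).2 x) * u x
      + ((Ecoef a k n).1 x + deriv (Ecoef a k n).2 x
          - ((deriv a x:ℝ):ℂ) / (a x:ℂ) * (Ecoef a k n).2 x) * deriv u x
      + ∑ m ∈ Finset.range (n+2), Fcoef a k (n+1) (m+1) x * iteratedDeriv m f x
    have hFsucc : ∀ m, Fcoef a k (n+1) (m+1) x
        = deriv (Fcoef a k n (m+1)) x + Fcoef a k n m x := fun m => rfl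
    simp only [hFsucc]
    have hz : deriv (Fcoef a k n (n+1+1)) x = 0 := by
      rw [fcoef_eq_zero a k n (n+2) le_rfl]
      simp
    have hsum_eq : ∑ m ∈ Finset.range (n+2),
          (deriv (Fcoef a k n (m+1)) x + Fcoef a k n m x) * iteratedDeriv m f x
        = (∑ m ∈ Finset.range (n+1),
            (deriv (Fcoef a k n (m+1)) x * iteratedDeriv m f x
              + Fcoef a k n (m+1) x * iteratedDeriv (m+1) f x))
          + (Ecoef a k n).2 x / (a x : ℂ) * f x := by
      rw [Finset.sum_congr rfl (fun m _ => add_mul (deriv (Fcoef a k n (m+1)) x)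
            (Fcoef a k n m x) (iteratedDeriv m f x)),
          Finset.sum_add_distrib,
          Finset.sum_range_succ (fun m => deriv (Fcoef a k n (m+1)) x * iteratedDeriv m f x),
          Finset.sum_range_succ' (fun m => Fcoef a k n m x * iteratedDeriv m f x) (n+1),
          Finset.sum_add_distrib, hz, fcoef_zero_idx a k n, iteratedDeriv_zero]
      ring
    rw [hsum_eq]
    ring

end Aux

section Taylor

lemma iteratedDerivWithin_eq_iteratedDeriv' {f : ℝ → ℂ} {U s : Set ℝ} (hU : IsOpen U)
    (hsub : s ⊆ U) (hf : ContDiffOn ℝ (⊤:ℕ∞) f U) (hs : UniqueDiffOn ℝ s) {x : ℝ} (hx : x ∈ s)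
    (n : ℕ) : iteratedDerivWithin n f s x = iteratedDeriv n f x := by
  have h1 : HasFTaylorSeriesUpToOn (⊤:ℕ∞) f (ftaylorSeriesWithin ℝ f U) U :=
    hf.ftaylorSeriesWithin hU.uniqueDiffOn
  have h2 : HasFTaylorSeriesUpToOn (⊤:ℕ∞) f (ftaylorSeriesWithin ℝ f U) s := h1.mono hsub
  have h3 := h2.eq_iteratedFDerivWithin_of_uniqueDiffOn (m := n) (by exact_mod_cast le_top) hs hx
  have h4 : ftaylorSeriesWithin ℝ f U x n = iteratedFDeriv ℝ n f x := by
    simp only [ftaylorSeriesWithin]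
    exact iteratedFDerivWithin_of_isOpen n hU (hsub hx)
  rw [iteratedDerivWithin_eq_iteratedFDerivWithin, ← h3, h4, iteratedDeriv_eq_iteratedFDeriv]

lemma taylor_right_bound {F : ℝ → ℂ} {U : Set ℝ} (hU : IsOpen U)
    (hF : ContDiffOn ℝ (⊤:ℕ∞) F U) {r : ℝ} (hr : 0 < r) (hsub : Set.Icc 0 r ⊆ U) (N : ℕ) :
    ∃ C, ∀ t ∈ Set.Icc (0:ℝ) r,
      ‖F t - ∑ n ∈ Finset.range (N+1), ((t:ℂ)^n / (n.factorial : ℂ)) * iteratedDeriv n F 0‖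
        ≤ C * t ^ (N+1) := by
  have hF' : ContDiffOn ℝ (N+1) F (Set.Icc 0 r) := (hF.of_le (by exact_mod_cast le_top)).mono hsub
  obtain ⟨C, hC⟩ := exists_taylor_mean_remainder_bound hr.le hF'
  refine ⟨C, fun t ht => ?_⟩
  have := hC t ht
  rw [taylor_within_apply] at this
  have hzero : (0:ℝ) ∈ Set.Icc (0:ℝ) r := by constructor <;> simp [hr.le]
  have heq : ∀ k ∈ Finset.range (N+1),
      ((((k.factorial:ℝ))⁻¹ * (t - 0) ^ k) • iteratedDerivWithin k F (Set.Icc 0 r) 0)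
      = ((t:ℂ)^k / (k.factorial : ℂ)) * iteratedDeriv k F 0 := by
    intro k _
    rw [iteratedDerivWithin_eq_iteratedDeriv' hU hsub hF (uniqueDiffOn_Icc hr) hzero k]
    rw [Complex.real_smul]
    push_cast
    ring
  rw [Finset.sum_congr rfl heq] at this
  simpa using this

lemma taylor_isBigO_center {f : ℝ → ℂ} {p q xb : ℝ} (hf : ContDiffOn ℝ (⊤:ℕ∞) f (Set.Ioo p q))
    (hxb : xb ∈ Set.Ioo p q) (N : ℕ) :
    (fun h : ℝ => f (xb + h) - ∑ n ∈ Finset.range (N+1),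
        ((h:ℂ)^n / (n.factorial : ℂ)) * iteratedDeriv n f xb)
      =O[𝓝 (0:ℝ)] (fun h => h^(N+1)) := by
  set F : ℝ → ℂ := fun s => f (xb + s) with hFdef
  set U : Set ℝ := (fun s : ℝ => xb + s) ⁻¹' (Set.Ioo p q) with hUdef
  have hUopen : IsOpen U := (isOpen_Ioo).preimage (by fun_prop)
  have h0U : (0:ℝ) ∈ U := by simpa [hUdef] using hxb
  have hFc : ContDiffOn ℝ (⊤:ℕ∞) F U :=
    hf.comp ((contDiff_const.add contDiff_id).contDiffOn) (fun x hx => hx)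
  have hFd : ∀ n, iteratedDeriv n F 0 = iteratedDeriv n f xb := by
    intro n
    have := iteratedDeriv_comp_const_add n f xb
    have h2 := congrFun this 0
    simpa using h2
  -- the reflected function
  set G : ℝ → ℂ := fun s => F (-s) with hGdef
  have hGc : ContDiffOn ℝ (⊤:ℕ∞) G (-U) :=
    hFc.comp (contDiff_neg.contDiffOn) (fun x hx => by simpa using hx)
  have hGopen : IsOpen (-U) := hUopen.neg
  have h0G : (0:ℝ) ∈ -U := by simpa using h0U
  have hGd : ∀ n, iteratedDeriv n G 0 = ((-1:ℝ)^n) • iteratedDeriv n F 0 := by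
    intro n
    have := iteratedDeriv_comp_neg n F 0
    simpa [hGdef] using this
  -- radius
  obtain ⟨r, hr, hball⟩ := Metric.isOpen_iff.mp (hUopen.inter hGopen) 0 ⟨h0U, h0G⟩
  have hrsub : Set.Icc (0:ℝ) (r/2) ⊆ U ∩ (-U) := by
    intro t ht
    apply hball
    simp only [Metric.mem_ball, Real.dist_eq, sub_zero]
    have := ht.1; have := ht.2
    rw [abs_of_nonneg ht.1]; linarith
  have hr2 : 0 < r/2 := by linarith
  obtain ⟨C1, hC1⟩ := taylor_right_bound hUopen hFc hr2 (hrsub.trans Set.inter_subset_left) N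
  obtain ⟨C2, hC2⟩ := taylor_right_bound hGopen hGc hr2 (hrsub.trans Set.inter_subset_right) N
  rw [Asymptotics.isBigO_iff]
  refine ⟨max C1 C2, ?_⟩
  have hev : ∀ᶠ h : ℝ in 𝓝 0, |h| ≤ r/2 := by
    have : Set.Icc (-(r/2)) (r/2) ∈ 𝓝 (0:ℝ) := Icc_mem_nhds (by linarith) hr2
    filter_upwards [this] with h hh
    exact abs_le.mpr ⟨hh.1, hh.2⟩
  filter_upwards [hev] with h hh
  rcases le_or_gt 0 h with hpos | hneg
  · have := hC1 h ⟨hpos, (abs_of_nonneg hpos ▸ hh)⟩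
    simp only [hFdef] at this
    calc ‖f (xb + h) - ∑ n ∈ Finset.range (N+1), ((h:ℂ)^n / (n.factorial:ℂ)) * iteratedDeriv n f xb‖
        = ‖F h - ∑ n ∈ Finset.range (N+1), ((h:ℂ)^n / (n.factorial:ℂ)) * iteratedDeriv n F 0‖ := by
          simp only [hFdef]
          congr 2
          exact Finset.sum_congr rfl fun n _ => by rw [hFd]
      _ ≤ C1 * h^(N+1) := hC1 h ⟨hpos, (abs_of_nonneg hpos ▸ hh)⟩
      _ ≤ max C1 C2 * ‖h^(N+1)‖ := by
          rw [norm_pow, Real.norm_eq_abs, abs_of_nonneg hpos]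
          gcongr
          exact le_max_left _ _
  · set t := -h with htdef
    have htpos : 0 ≤ t := by simp [htdef]; linarith
    have htmem : t ∈ Set.Icc (0:ℝ) (r/2) := ⟨htpos, by rw [htdef]; rw [abs_of_neg hneg] at hh; linarith⟩
    have key := hC2 t htmem
    have hsum : ∑ n ∈ Finset.range (N+1), ((t:ℂ)^n / (n.factorial:ℂ)) * iteratedDeriv n G 0
        = ∑ n ∈ Finset.range (N+1), ((h:ℂ)^n / (n.factorial:ℂ)) * iteratedDeriv n f xb := by
      refine Finset.sum_congr rfl fun n _ => ?_
      rw [hGd, hFd, htdef, Complex.real_smul]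
      push_cast
      have h1 : ((-1:ℂ))^n * ((-1:ℂ))^n = 1 := by rw [← mul_pow]; norm_num
      linear_combination ((h:ℂ)^n / (n.factorial:ℂ) * iteratedDeriv n f xb) * h1
    have hGh : G t = f (xb + h) := by simp [hGdef, hFdef, htdef]
    rw [hGh, hsum] at key
    calc ‖f (xb + h) - ∑ n ∈ Finset.range (N+1), ((h:ℂ)^n / (n.factorial:ℂ)) * iteratedDeriv n f xb‖
        ≤ C2 * t^(N+1) := key
      _ ≤ max C1 C2 * ‖h^(N+1)‖ := by
          rw [norm_pow, Real.norm_eq_abs, abs_of_neg hneg]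
          have : t ^ (N+1) = (-h)^(N+1) := by rw [htdef]
          rw [this]
          have hnn : (0:ℝ) ≤ (-h)^(N+1) := pow_nonneg (by linarith) _
          exact mul_le_mul_of_nonneg_right (le_max_right _ _) hnn

end Taylor

section Assembly

variable {p q : ℝ} {a : ℝ → ℝ} {k f u : ℝ → ℂ}

lemma sum_split2 (g : ℕ → ℂ) (B : ℕ) :
    ∑ n ∈ Finset.range (B+2), g n = g 0 + g 1 + ∑ j ∈ Finset.Icc 2 (B+1), g j := by
  have h1 : Finset.Icc 2 (B+1) = Finset.Ico 2 (B+2) := by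
    rw [← Finset.Ico_add_one_right_eq_Icc]; rfl
  rw [h1, Finset.range_eq_Ico,
    ← Finset.sum_Ico_consecutive g (by omega : (0:ℕ) ≤ 2) (by omega : (2:ℕ) ≤ B+2)]
  have h2 : ∑ n ∈ Finset.Ico 0 2, g n = g 0 + g 1 := by
    rw [← Finset.range_eq_Ico]
    rw [Finset.sum_range_succ, Finset.sum_range_one]
  rw [h2]

lemma taylor_poly_id (ha : ContDiffOn ℝ (⊤:ℕ∞) a (Set.Ioo p q))
    (hk : ContDiffOn ℝ (⊤:ℕ∞) k (Set.Ioo p q))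
    (hf : ContDiffOn ℝ (⊤:ℕ∞) f (Set.Ioo p q))
    (hapos : ∀ x ∈ Set.Ioo p q, 0 < a x)
    (hu : ContDiffOn ℝ (⊤:ℕ∞) u (Set.Ioo p q))
    (hode : ∀ x ∈ Set.Ioo p q, deriv (fun y => (a y : ℂ) * deriv u y) x + k x * u x = f x)
    {xb : ℝ} (hxb : xb ∈ Set.Ioo p q) (B : ℕ) (h : ℝ) :
    ∑ n ∈ Finset.range (B+2), ((h:ℂ)^n / (n.factorial : ℂ)) * iteratedDeriv n u xb
      = u xb * EPoly0 a k xb (B+1) h + deriv u xb * (h:ℂ) * EPoly1 a k xb (B+1) h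
        + ∑ ℓ ∈ Finset.range B,
            iteratedDeriv ℓ f xb * (h:ℂ)^(ℓ+2) * FPoly a k xb ℓ (B+1) h := by
  have hid := deriv_identity ha hk hf hapos hu hode
  have hj : ∀ j ∈ Finset.Icc 2 (B+1), iteratedDeriv j u xb
      = Ej0 a k j xb * u xb + Ej1 a k j xb * deriv u xb
        + ∑ m ∈ Finset.range (j-1), Fjl a k j m xb * iteratedDeriv m f xb := by
    intro j hjm
    rw [Finset.mem_Icc] at hjm
    obtain ⟨n, rfl⟩ : ∃ n, j = n + 2 := ⟨j - 2, by omega⟩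
    have e1 : n + 2 - 2 = n := by omega
    have e2 : n + 2 - 1 = n + 1 := by omega
    simpa [Ej0, Ej1, Fjl, e1, e2] using hid n xb hxb
  rw [sum_split2 (fun n => ((h:ℂ)^n / (n.factorial : ℂ)) * iteratedDeriv n u xb) B]
  rw [Finset.sum_congr rfl (fun j hjm => by rw [hj j hjm])]
  have hdist : ∑ j ∈ Finset.Icc 2 (B+1), ((h:ℂ)^j / (j.factorial : ℂ))
        * (Ej0 a k j xb * u xb + Ej1 a k j xb * deriv u xb
            + ∑ m ∈ Finset.range (j-1), Fjl a k j m xb * iteratedDeriv m f xb)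
      = (∑ j ∈ Finset.Icc 2 (B+1), ((h:ℂ)^j / (j.factorial : ℂ)) * (Ej0 a k j xb * u xb))
        + (∑ j ∈ Finset.Icc 2 (B+1), ((h:ℂ)^j / (j.factorial : ℂ)) * (Ej1 a k j xb * deriv u xb))
        + ∑ j ∈ Finset.Icc 2 (B+1), ∑ m ∈ Finset.range (j-1),
            ((h:ℂ)^j / (j.factorial : ℂ)) * (Fjl a k j m xb * iteratedDeriv m f xb) := by
    rw [← Finset.sum_add_distrib, ← Finset.sum_add_distrib]
    refine Finset.sum_congr rfl fun j _ => ?_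
    rw [mul_add, mul_add, Finset.mul_sum]
  rw [hdist]
  have hE0 : ∑ j ∈ Finset.Icc 2 (B+1), ((h:ℂ)^j / (j.factorial : ℂ)) * (Ej0 a k j xb * u xb)
      = u xb * ∑ j ∈ Finset.Icc 2 (B+1), Ej0 a k j xb * (h:ℂ)^j / (j.factorial : ℂ) := by
    rw [Finset.mul_sum]
    exact Finset.sum_congr rfl fun j _ => by ring
  have hE1 : ∑ j ∈ Finset.Icc 2 (B+1), ((h:ℂ)^j / (j.factorial : ℂ)) * (Ej1 a k j xb * deriv u xb)
      = deriv u xb * (h:ℂ)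
        * ∑ j ∈ Finset.Icc 2 (B+1), Ej1 a k j xb * (h:ℂ)^(j-1) / (j.factorial : ℂ) := by
    rw [Finset.mul_sum]
    refine Finset.sum_congr rfl fun j hjm => ?_
    rw [Finset.mem_Icc] at hjm
    have hpow : (h:ℂ)^j = (h:ℂ) * (h:ℂ)^(j-1) := by
      rw [← pow_succ']
      congr 1
      omega
    rw [hpow]; ring
  have hFswap : ∑ j ∈ Finset.Icc 2 (B+1), ∑ m ∈ Finset.range (j-1),
        ((h:ℂ)^j / (j.factorial : ℂ)) * (Fjl a k j m xb * iteratedDeriv m f xb)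
      = ∑ ℓ ∈ Finset.range B,
          iteratedDeriv ℓ f xb * (h:ℂ)^(ℓ+2) * FPoly a k xb ℓ (B+1) h := by
    rw [Finset.sum_comm' (s' := fun m => Finset.Icc (m+2) (B+1)) (t' := Finset.range B)
      (by
        intro j m
        simp only [Finset.mem_Icc, Finset.mem_range]
        omega)]
    refine Finset.sum_congr rfl fun ℓ hℓ => ?_
    rw [FPoly, Finset.mul_sum]
    refine Finset.sum_congr rfl fun j hjm => ?_
    rw [Finset.mem_Icc] at hjm
    have hpow : (h:ℂ)^j = (h:ℂ)^(ℓ+2) * (h:ℂ)^(j-ℓ-2) := by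
      rw [← pow_add]
      congr 1
      omega
    rw [hpow]; ring
  rw [hE0, hE1, hFswap]
  have h0 : ((h:ℂ)^0 / ((Nat.factorial 0 : ℕ) : ℂ)) * iteratedDeriv 0 u xb = u xb := by
    simp
  have h1 : ((h:ℂ)^1 / ((Nat.factorial 1 : ℕ) : ℂ)) * iteratedDeriv 1 u xb
      = deriv u xb * (h:ℂ) := by
    simp [iteratedDeriv_one]; ring
  rw [EPoly0, EPoly1]
  simp only [iteratedDeriv_zero, iteratedDeriv_one, Nat.factorial_zero, Nat.factorial_one,
    pow_zero, pow_one, Nat.cast_one]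
  ring

lemma pow_isBigO_pow {m n : ℕ} (hmn : m ≤ n) :
    (fun h : ℝ => h ^ n) =O[𝓝 (0:ℝ)] fun h : ℝ => h ^ m := by
  rw [Asymptotics.isBigO_iff]
  refine ⟨1, ?_⟩
  filter_upwards [Metric.ball_mem_nhds (0:ℝ) one_pos] with h hh
  simp only [Metric.mem_ball, Real.dist_eq, sub_zero] at hh
  rw [one_mul, Real.norm_eq_abs, Real.norm_eq_abs, abs_pow, abs_pow]
  exact pow_le_pow_of_le_one (abs_nonneg h) hh.le hmn

lemma cpow_isBigO (e : ℕ) :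
    (fun h : ℝ => ((h:ℂ))^e) =O[𝓝 (0:ℝ)] fun h : ℝ => h ^ e :=
  Asymptotics.isBigO_of_le _ fun h => by
    rw [norm_pow, norm_pow, Complex.norm_real]

lemma coe_isBigO : (fun h : ℝ => ((h:ℂ))) =O[𝓝 (0:ℝ)] fun h : ℝ => h :=
  Asymptotics.isBigO_of_le _ fun h => by rw [Complex.norm_real]

lemma isBigO_comp_neg {g : ℝ → ℂ} {e : ℕ}
    (hg : g =O[𝓝 (0:ℝ)] fun h : ℝ => h ^ e) :
    (fun h : ℝ => g (-h)) =O[𝓝 (0:ℝ)] fun h : ℝ => h ^ e := by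
  have hneg : Filter.Tendsto (fun h : ℝ => -h) (𝓝 0) (𝓝 (0:ℝ)) := by
    simpa using (continuous_neg (G := ℝ)).tendsto (0:ℝ)
  have h1 := hg.comp_tendsto hneg
  refine h1.trans (Asymptotics.isBigO_of_le _ fun h => ?_)
  simp [abs_pow]

lemma pow_isBigO_one (e : ℕ) :
    (fun h : ℝ => h ^ e) =O[𝓝 (0:ℝ)] (fun _ : ℝ => (1:ℝ)) :=
  ((continuous_pow e).tendsto (0:ℝ)).isBigO_one ℝ

lemma coeff_bounded {c α E : ℝ → ℂ} (hE : Continuous E) (hE1 : E 0 = 1)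
    (hα : ∃ U ∈ 𝓝 (0:ℝ), ContinuousOn α U) {N : ℕ}
    (hc : (fun h => c h * E h - α h) =O[𝓝 (0:ℝ)] fun h : ℝ => h ^ N) :
    c =O[𝓝 (0:ℝ)] (fun _ : ℝ => (1:ℝ)) := by
  obtain ⟨U, hU, hcont⟩ := hα
  have hαO : α =O[𝓝 (0:ℝ)] (fun _ : ℝ => (1:ℝ)) :=
    ((hcont.continuousAt hU).tendsto).isBigO_one ℝ
  have h1 : (fun h => c h * E h) =O[𝓝 (0:ℝ)] (fun _ : ℝ => (1:ℝ)) := by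
    have := (hc.trans (pow_isBigO_one N)).add hαO
    refine (this.congr (fun h => by ring) (fun h => by norm_num))
  have hEt : Filter.Tendsto E (𝓝 0) (𝓝 1) := by
    have := hE.tendsto (0:ℝ)
    rwa [hE1] at this
  have hinv : Filter.Tendsto (fun h => (E h)⁻¹) (𝓝 (0:ℝ)) (𝓝 (1:ℂ)) := by
    simpa using hEt.inv₀ one_ne_zero
  have hne : ∀ᶠ h : ℝ in 𝓝 0, E h ≠ 0 := hEt.eventually_ne one_ne_zero
  have heq : (fun h => (c h * E h) * (E h)⁻¹) =ᶠ[𝓝 (0:ℝ)] c := by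
    filter_upwards [hne] with h hh
    field_simp
  have h2 := h1.mul (hinv.isBigO_one ℝ)
  exact (h2.congr' heq (by filter_upwards with h; norm_num))

lemma continuous_EPoly0 (a : ℝ → ℝ) (k : ℝ → ℂ) (xb : ℝ) (B : ℕ) :
    Continuous (fun h : ℝ => EPoly0 a k xb B h) := by
  unfold EPoly0
  exact continuous_const.add (continuous_finset_sum _ fun j _ =>
    (continuous_const.mul (Complex.continuous_ofReal.pow _)).div_const _)

lemma continuous_EPoly1 (a : ℝ → ℝ) (k : ℝ → ℂ) (xb : ℝ) (B : ℕ) :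
    Continuous (fun h : ℝ => EPoly1 a k xb B h) := by
  unfold EPoly1
  exact continuous_const.add (continuous_finset_sum _ fun j _ =>
    (continuous_const.mul (Complex.continuous_ofReal.pow _)).div_const _)

lemma continuous_FPoly (a : ℝ → ℝ) (k : ℝ → ℂ) (xb : ℝ) (ℓ B : ℕ) :
    Continuous (fun h : ℝ => FPoly a k xb ℓ B h) := by
  unfold FPoly
  exact continuous_finset_sum _ fun j _ =>
    (continuous_const.mul (Complex.continuous_ofReal.pow _)).div_const _

lemma EPoly1_zero (a : ℝ → ℝ) (k : ℝ → ℂ) (xb : ℝ) (B : ℕ) : EPoly1 a k xb B 0 = 1 := by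
  unfold EPoly1
  rw [Finset.sum_eq_zero, add_zero]
  intro j hj
  rw [Finset.mem_Icc] at hj
  have hj1 : j - 1 ≠ 0 := by omega
  simp [zero_pow hj1]

lemma fpoly_tail {a : ℝ → ℝ} {k : ℝ → ℂ} {xb : ℝ} {ℓ Mt M : ℕ} (hl : ℓ < Mt) (hMMt : Mt ≤ M) :
    (fun h : ℝ => FPoly a k xb ℓ (M+1) h - FPoly a k xb ℓ (Mt+1) h)
      =O[𝓝 (0:ℝ)] fun h : ℝ => h ^ (Mt - ℓ) := by
  have hI : ∀ B, Finset.Icc (ℓ+2) B = Finset.Ioc (ℓ+1) B := by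
    intro B
    ext x
    simp only [Finset.mem_Icc, Finset.mem_Ioc]
    omega
  have hsplit : ∀ h : ℝ, FPoly a k xb ℓ (M+1) h - FPoly a k xb ℓ (Mt+1) h
      = ∑ j ∈ Finset.Ioc (Mt+1) (M+1), Fjl a k j ℓ xb * (h:ℂ)^(j-ℓ-2) / (j.factorial : ℂ) := by
    intro h
    rw [FPoly, FPoly, hI, hI,
      ← Finset.sum_Ioc_consecutive _ (show ℓ+1 ≤ Mt+1 by omega) (show Mt+1 ≤ M+1 by omega)]
    ring
  have : (fun h : ℝ => ∑ j ∈ Finset.Ioc (Mt+1) (M+1),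
      Fjl a k j ℓ xb * (h:ℂ)^(j-ℓ-2) / (j.factorial : ℂ)) =O[𝓝 (0:ℝ)]
      fun h : ℝ => h ^ (Mt - ℓ) := by
    apply Asymptotics.IsBigO.fun_sum
    intro j hj
    rw [Finset.mem_Ioc] at hj
    have hO : (fun h : ℝ => ((h:ℂ))^(j-ℓ-2)) =O[𝓝 (0:ℝ)] fun h : ℝ => h ^ (Mt - ℓ) :=
      (cpow_isBigO _).trans (pow_isBigO_pow (by omega))
    have := hO.const_mul_left (Fjl a k j ℓ xb / (j.factorial : ℂ))
    exact this.congr (fun h => by ring) (fun h => rfl)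
  exact this.congr (fun h => (hsplit h).symm) (fun h => rfl)

end Assembly

/-- Theorem 3.2, accuracy part.  Under the conditions (3.6) and (3.7)
on the stencil coefficients `c₋₁, c₀, c₁` and `d₀, …, d_{M̃-1}`, the compact finite
difference scheme has accuracy order `M̃` at the base point `x_b`: for every smooth
solution `u` of `(a u')' + k u = f` on `I`, the (`h²`-scaled) local truncation error is
`O(h^{M̃+2})` as `h → 0`. -/
theorem compact_stencil_accuracy_order
    (p q : ℝ) (a : ℝ → ℝ) (k f : ℝ → ℂ)
    (ha : ContDiffOn ℝ (⊤ : ℕ∞) a (Set.Ioo p q))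
    (hk : ContDiffOn ℝ (⊤ : ℕ∞) k (Set.Ioo p q))
    (hf : ContDiffOn ℝ (⊤ : ℕ∞) f (Set.Ioo p q))
    (hapos : ∀ x ∈ Set.Ioo p q, 0 < a x)
    (xb : ℝ) (hxb : xb ∈ Set.Ioo p q) (M Mt : ℕ) (hMt : 1 ≤ Mt) (hMMt : Mt ≤ M) (hM : 2 ≤ M)
    (α cm1 c0 c1 : ℝ → ℂ) (d : ℕ → ℝ → ℂ)
    (hαcont : ∃ U ∈ 𝓝 (0 : ℝ), ContinuousOn α U)
    (hcm1cont : ∃ U ∈ 𝓝 (0 : ℝ), ContinuousOn cm1 U)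
    (hc0cont : ∃ U ∈ 𝓝 (0 : ℝ), ContinuousOn c0 U)
    (hc1cont : ∃ U ∈ 𝓝 (0 : ℝ), ContinuousOn c1 U)
    (hdcont : ∀ ℓ < Mt, ∃ U ∈ 𝓝 (0 : ℝ), ContinuousOn (d ℓ) U)
    (hα0 : α 0 ≠ 0)
    (hc1 : (fun h : ℝ => c1 h * EPoly1 a k xb (M + 1) h - α h)
      =O[𝓝 (0 : ℝ)] fun h : ℝ => h ^ (M + 1))
    (hcm1 : (fun h : ℝ => cm1 h * EPoly1 a k xb (M + 1) (-h) - α h)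
      =O[𝓝 (0 : ℝ)] fun h : ℝ => h ^ (M + 1))
    (hc0 : (fun h : ℝ => c0 h + c1 h * EPoly0 a k xb (M + 1) h + cm1 h * EPoly0 a k xb (M + 1) (-h))
      =O[𝓝 (0 : ℝ)] fun h : ℝ => h ^ (M + 2))
    (hd : ∀ ℓ < Mt,
      (fun h : ℝ => d ℓ h + (if ℓ = 0 then 1 else 0)
          - c1 h * FPoly a k xb ℓ (Mt + 1) h
          - (-1 : ℂ) ^ ℓ * cm1 h * FPoly a k xb ℓ (Mt + 1) (-h))
        =O[𝓝 (0 : ℝ)] fun h : ℝ => h ^ (Mt - ℓ)) :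
    ∀ u : ℝ → ℂ, ContDiffOn ℝ (⊤ : ℕ∞) u (Set.Ioo p q) →
      (∀ x ∈ Set.Ioo p q, deriv (fun y => (a y : ℂ) * deriv u y) x + k x * u x = f x) →
      (fun h : ℝ => cm1 h * u (xb - h) + c0 h * u xb + c1 h * u (xb + h)
          - (h : ℂ) ^ 2 * ∑ ℓ ∈ Finset.range Mt, d ℓ h * (h : ℂ) ^ ℓ * iteratedDeriv ℓ f xb
          - (h : ℂ) ^ 2 * f xb)
        =O[𝓝 (0 : ℝ)] fun h : ℝ => h ^ (Mt + 2) := by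
  intro u hu hode
  have hTay := taylor_poly_id ha hk hf hapos hu hode hxb M
  set R : ℝ → ℂ := fun h => u (xb + h) - ∑ n ∈ Finset.range (M+2),
      ((h:ℂ)^n / (n.factorial : ℂ)) * iteratedDeriv n u xb with hRdef
  have hRO : R =O[𝓝 (0:ℝ)] fun h : ℝ => h^(M+2) := taylor_isBigO_center hu hxb (M+1)
  have hRnegO : (fun h : ℝ => R (-h)) =O[𝓝 (0:ℝ)] fun h : ℝ => h^(M+2) := isBigO_comp_neg hRO
  have huplus : ∀ h : ℝ, u (xb + h)
      = u xb * EPoly0 a k xb (M+1) h + deriv u xb * (h:ℂ) * EPoly1 a k xb (M+1) h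
        + (∑ ℓ ∈ Finset.range M, iteratedDeriv ℓ f xb * (h:ℂ)^(ℓ+2) * FPoly a k xb ℓ (M+1) h)
        + R h := by
    intro h
    have h1 : u (xb + h) = (∑ n ∈ Finset.range (M+2),
        ((h:ℂ)^n / (n.factorial : ℂ)) * iteratedDeriv n u xb) + R h := by
      rw [hRdef]; ring
    rw [h1, hTay h]
  -- boundedness of coefficients
  have hc1O : c1 =O[𝓝 (0:ℝ)] (fun _ : ℝ => (1:ℝ)) :=
    coeff_bounded (continuous_EPoly1 a k xb (M+1)) (EPoly1_zero a k xb (M+1)) hαcont hc1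
  have hcm1O : cm1 =O[𝓝 (0:ℝ)] (fun _ : ℝ => (1:ℝ)) := by
    refine coeff_bounded (E := fun h => EPoly1 a k xb (M+1) (-h))
      ((continuous_EPoly1 a k xb (M+1)).comp continuous_neg) ?_ hαcont hcm1
    show EPoly1 a k xb (M+1) (-0) = 1
    rw [neg_zero]; exact EPoly1_zero a k xb (M+1)
  have hFPO : ∀ ℓ B, (fun h : ℝ => FPoly a k xb ℓ B h) =O[𝓝 (0:ℝ)] (fun _ : ℝ => (1:ℝ)) :=
    fun ℓ B => ((continuous_FPoly a k xb ℓ B).tendsto 0).isBigO_one ℝ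
  have hFPOneg : ∀ ℓ B, (fun h : ℝ => FPoly a k xb ℓ B (-h)) =O[𝓝 (0:ℝ)]
      (fun _ : ℝ => (1:ℝ)) :=
    fun ℓ B => (((continuous_FPoly a k xb ℓ B).comp continuous_neg).tendsto 0).isBigO_one ℝ
  have hnegpow : ∀ (h : ℝ) (ℓ : ℕ), (-(h:ℂ))^(ℓ+2) = (-1:ℂ)^ℓ * (h:ℂ)^(ℓ+2) := by
    intro h ℓ
    rw [neg_pow, pow_add]
    ring
  -- the key sum identity
  have key : ∀ h : ℝ,
      c1 h * (∑ ℓ ∈ Finset.range M, iteratedDeriv ℓ f xb * (h:ℂ)^(ℓ+2) * FPoly a k xb ℓ (M+1) h)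
      + cm1 h * (∑ ℓ ∈ Finset.range M,
          iteratedDeriv ℓ f xb * (-(h:ℂ))^(ℓ+2) * FPoly a k xb ℓ (M+1) (-h))
      - (h:ℂ)^2 * (∑ ℓ ∈ Finset.range Mt, d ℓ h * (h:ℂ)^ℓ * iteratedDeriv ℓ f xb)
      - (h:ℂ)^2 * f xb
      = (∑ ℓ ∈ Finset.range Mt, iteratedDeriv ℓ f xb * ((h:ℂ)^(ℓ+2) *
          ((-(d ℓ h + (if ℓ = 0 then (1:ℂ) else 0) - c1 h * FPoly a k xb ℓ (Mt+1) h
              - (-1:ℂ)^ℓ * cm1 h * FPoly a k xb ℓ (Mt+1) (-h)))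
            + c1 h * (FPoly a k xb ℓ (M+1) h - FPoly a k xb ℓ (Mt+1) h)
            + (-1:ℂ)^ℓ * (cm1 h * (FPoly a k xb ℓ (M+1) (-h) - FPoly a k xb ℓ (Mt+1) (-h))))))
        + (∑ ℓ ∈ Finset.Ico Mt M, iteratedDeriv ℓ f xb * ((h:ℂ)^(ℓ+2) *
            (c1 h * FPoly a k xb ℓ (M+1) h + (-1:ℂ)^ℓ * (cm1 h * FPoly a k xb ℓ (M+1) (-h))))) := by
    intro h
    rw [← Finset.sum_range_add_sum_Ico
        (fun ℓ => iteratedDeriv ℓ f xb * (h:ℂ)^(ℓ+2) * FPoly a k xb ℓ (M+1) h) hMMt,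
      ← Finset.sum_range_add_sum_Ico
        (fun ℓ => iteratedDeriv ℓ f xb * (-(h:ℂ))^(ℓ+2) * FPoly a k xb ℓ (M+1) (-h)) hMMt]
    have h2 : ∑ ℓ ∈ Finset.Ico Mt M, iteratedDeriv ℓ f xb * ((h:ℂ)^(ℓ+2) *
          (c1 h * FPoly a k xb ℓ (M+1) h + (-1:ℂ)^ℓ * (cm1 h * FPoly a k xb ℓ (M+1) (-h))))
        = c1 h * (∑ ℓ ∈ Finset.Ico Mt M,
              iteratedDeriv ℓ f xb * (h:ℂ)^(ℓ+2) * FPoly a k xb ℓ (M+1) h)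
          + cm1 h * (∑ ℓ ∈ Finset.Ico Mt M,
              iteratedDeriv ℓ f xb * (-(h:ℂ))^(ℓ+2) * FPoly a k xb ℓ (M+1) (-h)) := by
      rw [Finset.mul_sum, Finset.mul_sum, ← Finset.sum_add_distrib]
      refine Finset.sum_congr rfl fun ℓ _ => ?_
      rw [hnegpow h ℓ]
      ring
    have hdelta : ∑ ℓ ∈ Finset.range Mt,
          iteratedDeriv ℓ f xb * ((h:ℂ)^(ℓ+2) * (if ℓ = 0 then (1:ℂ) else 0))
        = (h:ℂ)^2 * f xb := by
      have hcongr : ∀ ℓ ∈ Finset.range Mt,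
          iteratedDeriv ℓ f xb * ((h:ℂ)^(ℓ+2) * (if ℓ = 0 then (1:ℂ) else 0))
            = if ℓ = 0 then iteratedDeriv ℓ f xb * (h:ℂ)^(ℓ+2) else 0 := by
        intro ℓ _
        split <;> simp
      rw [Finset.sum_congr rfl hcongr, Finset.sum_ite_eq' (Finset.range Mt) 0
        (fun ℓ => iteratedDeriv ℓ f xb * (h:ℂ)^(ℓ+2))]
      rw [if_pos (Finset.mem_range.mpr (by omega))]
      rw [iteratedDeriv_zero]
      ring
    have h1 : ∑ ℓ ∈ Finset.range Mt, iteratedDeriv ℓ f xb * ((h:ℂ)^(ℓ+2) *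
          ((-(d ℓ h + (if ℓ = 0 then (1:ℂ) else 0) - c1 h * FPoly a k xb ℓ (Mt+1) h
              - (-1:ℂ)^ℓ * cm1 h * FPoly a k xb ℓ (Mt+1) (-h)))
            + c1 h * (FPoly a k xb ℓ (M+1) h - FPoly a k xb ℓ (Mt+1) h)
            + (-1:ℂ)^ℓ * (cm1 h * (FPoly a k xb ℓ (M+1) (-h) - FPoly a k xb ℓ (Mt+1) (-h)))))
        = c1 h * (∑ ℓ ∈ Finset.range Mt,
              iteratedDeriv ℓ f xb * (h:ℂ)^(ℓ+2) * FPoly a k xb ℓ (M+1) h)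
          + cm1 h * (∑ ℓ ∈ Finset.range Mt,
              iteratedDeriv ℓ f xb * (-(h:ℂ))^(ℓ+2) * FPoly a k xb ℓ (M+1) (-h))
          - (∑ ℓ ∈ Finset.range Mt,
              iteratedDeriv ℓ f xb * ((h:ℂ)^(ℓ+2) * d ℓ h))
          - (∑ ℓ ∈ Finset.range Mt,
              iteratedDeriv ℓ f xb * ((h:ℂ)^(ℓ+2) * (if ℓ = 0 then (1:ℂ) else 0))) := by
      rw [Finset.mul_sum, Finset.mul_sum, ← Finset.sum_add_distrib,
        ← Finset.sum_sub_distrib, ← Finset.sum_sub_distrib]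
      refine Finset.sum_congr rfl fun ℓ _ => ?_
      rw [hnegpow h ℓ]
      ring
    have hdsum : (h:ℂ)^2 * (∑ ℓ ∈ Finset.range Mt, d ℓ h * (h:ℂ)^ℓ * iteratedDeriv ℓ f xb)
        = ∑ ℓ ∈ Finset.range Mt, iteratedDeriv ℓ f xb * ((h:ℂ)^(ℓ+2) * d ℓ h) := by
      rw [Finset.mul_sum]
      refine Finset.sum_congr rfl fun ℓ _ => ?_
      rw [pow_add]
      ring
    rw [h1, h2, hdelta, hdsum]
    ring
  -- pointwise form of the truncation error
  have hsplit : ∀ h : ℝ,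
      cm1 h * u (xb - h) + c0 h * u xb + c1 h * u (xb + h)
        - (h:ℂ)^2 * ∑ ℓ ∈ Finset.range Mt, d ℓ h * (h:ℂ)^ℓ * iteratedDeriv ℓ f xb
        - (h:ℂ)^2 * f xb
      = u xb * (c0 h + c1 h * EPoly0 a k xb (M+1) h + cm1 h * EPoly0 a k xb (M+1) (-h))
        + deriv u xb * ((h:ℂ) * (c1 h * EPoly1 a k xb (M+1) h
            - cm1 h * EPoly1 a k xb (M+1) (-h)))
        + (∑ ℓ ∈ Finset.range Mt, iteratedDeriv ℓ f xb * ((h:ℂ)^(ℓ+2) *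
            ((-(d ℓ h + (if ℓ = 0 then (1:ℂ) else 0) - c1 h * FPoly a k xb ℓ (Mt+1) h
                - (-1:ℂ)^ℓ * cm1 h * FPoly a k xb ℓ (Mt+1) (-h)))
              + c1 h * (FPoly a k xb ℓ (M+1) h - FPoly a k xb ℓ (Mt+1) h)
              + (-1:ℂ)^ℓ * (cm1 h * (FPoly a k xb ℓ (M+1) (-h)
                  - FPoly a k xb ℓ (Mt+1) (-h))))))
        + (∑ ℓ ∈ Finset.Ico Mt M, iteratedDeriv ℓ f xb * ((h:ℂ)^(ℓ+2) *
            (c1 h * FPoly a k xb ℓ (M+1) h + (-1:ℂ)^ℓ * (cm1 h * FPoly a k xb ℓ (M+1) (-h)))))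
        + c1 h * R h + cm1 h * R (-h) := by
    intro h
    rw [sub_eq_add_neg xb h, huplus h, huplus (-h)]
    push_cast
    linear_combination key h
  have hfun : (fun h : ℝ => cm1 h * u (xb - h) + c0 h * u xb + c1 h * u (xb + h)
      - (h:ℂ)^2 * ∑ ℓ ∈ Finset.range Mt, d ℓ h * (h:ℂ)^ℓ * iteratedDeriv ℓ f xb
      - (h:ℂ)^2 * f xb) = _ := funext hsplit
  rw [hfun]
  -- now bound each piece
  have T1 : (fun h : ℝ => u xb * (c0 h + c1 h * EPoly0 a k xb (M+1) h
      + cm1 h * EPoly0 a k xb (M+1) (-h))) =O[𝓝 (0:ℝ)] fun h : ℝ => h^(Mt+2) :=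
    (hc0.const_mul_left (u xb)).trans (pow_isBigO_pow (by omega))
  have hB : (fun h : ℝ => c1 h * EPoly1 a k xb (M+1) h - cm1 h * EPoly1 a k xb (M+1) (-h))
      =O[𝓝 (0:ℝ)] fun h : ℝ => h^(M+1) :=
    (hc1.sub hcm1).congr (fun h => by ring) (fun h => rfl)
  have T2 : (fun h : ℝ => deriv u xb * ((h:ℂ) * (c1 h * EPoly1 a k xb (M+1) h
      - cm1 h * EPoly1 a k xb (M+1) (-h)))) =O[𝓝 (0:ℝ)] fun h : ℝ => h^(Mt+2) := by
    have hmul := (coe_isBigO.mul hB).const_mul_left (deriv u xb)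
    have hmul2 : (fun h : ℝ => deriv u xb * ((h:ℂ) * (c1 h * EPoly1 a k xb (M+1) h
        - cm1 h * EPoly1 a k xb (M+1) (-h)))) =O[𝓝 (0:ℝ)] fun h : ℝ => h^(M+2) :=
      hmul.congr (fun h => rfl) (fun h => by rw [← pow_succ'])
    exact hmul2.trans (pow_isBigO_pow (by omega))
  have T3 : (fun h : ℝ => ∑ ℓ ∈ Finset.range Mt, iteratedDeriv ℓ f xb * ((h:ℂ)^(ℓ+2) *
      ((-(d ℓ h + (if ℓ = 0 then (1:ℂ) else 0) - c1 h * FPoly a k xb ℓ (Mt+1) h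
          - (-1:ℂ)^ℓ * cm1 h * FPoly a k xb ℓ (Mt+1) (-h)))
        + c1 h * (FPoly a k xb ℓ (M+1) h - FPoly a k xb ℓ (Mt+1) h)
        + (-1:ℂ)^ℓ * (cm1 h * (FPoly a k xb ℓ (M+1) (-h) - FPoly a k xb ℓ (Mt+1) (-h))))))
      =O[𝓝 (0:ℝ)] fun h : ℝ => h^(Mt+2) := by
    apply Asymptotics.IsBigO.fun_sum
    intro ℓ hℓ
    rw [Finset.mem_range] at hℓ
    have htp := fpoly_tail (a := a) (k := k) (xb := xb) hℓ hMMt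
    have htm := isBigO_comp_neg htp
    have P1 := (hd ℓ hℓ).neg_left
    have P2 : (fun h : ℝ => c1 h * (FPoly a k xb ℓ (M+1) h - FPoly a k xb ℓ (Mt+1) h))
        =O[𝓝 (0:ℝ)] fun h : ℝ => h^(Mt-ℓ) :=
      (hc1O.mul htp).congr (fun h => rfl) (fun h => one_mul _)
    have P3 : (fun h : ℝ => (-1:ℂ)^ℓ * (cm1 h * (FPoly a k xb ℓ (M+1) (-h)
        - FPoly a k xb ℓ (Mt+1) (-h)))) =O[𝓝 (0:ℝ)] fun h : ℝ => h^(Mt-ℓ) :=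
      ((hcm1O.mul htm).congr (fun h => rfl) (fun h => one_mul _)).const_mul_left _
    have hbr := (P1.add P2).add P3
    have hterm := ((cpow_isBigO (ℓ+2)).mul hbr).const_mul_left (iteratedDeriv ℓ f xb)
    refine hterm.congr (fun h => rfl) (fun h => ?_)
    rw [← pow_add]
    congr 1
    omega
  have T4 : (fun h : ℝ => ∑ ℓ ∈ Finset.Ico Mt M, iteratedDeriv ℓ f xb * ((h:ℂ)^(ℓ+2) *
      (c1 h * FPoly a k xb ℓ (M+1) h + (-1:ℂ)^ℓ * (cm1 h * FPoly a k xb ℓ (M+1) (-h)))))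
      =O[𝓝 (0:ℝ)] fun h : ℝ => h^(Mt+2) := by
    apply Asymptotics.IsBigO.fun_sum
    intro ℓ hℓ
    rw [Finset.mem_Ico] at hℓ
    have Q1 : (fun h : ℝ => c1 h * FPoly a k xb ℓ (M+1) h) =O[𝓝 (0:ℝ)]
        (fun _ : ℝ => (1:ℝ)) :=
      (hc1O.mul (hFPO ℓ (M+1))).congr (fun h => rfl) (fun h => one_mul _)
    have Q2 : (fun h : ℝ => (-1:ℂ)^ℓ * (cm1 h * FPoly a k xb ℓ (M+1) (-h))) =O[𝓝 (0:ℝ)]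
        (fun _ : ℝ => (1:ℝ)) :=
      ((hcm1O.mul (hFPOneg ℓ (M+1))).congr (fun h => rfl) (fun h => one_mul _)).const_mul_left _
    have hterm := ((cpow_isBigO (ℓ+2)).mul (Q1.add Q2)).const_mul_left (iteratedDeriv ℓ f xb)
    exact (hterm.congr (fun h => rfl) (fun h => mul_one _)).trans (pow_isBigO_pow (show Mt+2 ≤ ℓ+2 by omega))
  have T5 : (fun h : ℝ => c1 h * R h) =O[𝓝 (0:ℝ)] fun h : ℝ => h^(Mt+2) :=
    ((hc1O.mul hRO).congr (fun h => rfl) (fun h => one_mul _)).trans (pow_isBigO_pow (by omega))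
  have T6 : (fun h : ℝ => cm1 h * R (-h)) =O[𝓝 (0:ℝ)] fun h : ℝ => h^(Mt+2) :=
    ((hcm1O.mul hRnegO).congr (fun h => rfl) (fun h => one_mul _)).trans
      (pow_isBigO_pow (by omega))
  exact ((((T1.add T2).add T3).add T4).add T5).add T6
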